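/- The Cesàro operator C: L²(0,1) → L²(0,1) is not a compact operator. Specifically, the sequence xₙ(t) = √n·χ_{(0,1/n]}(t) converges weakly to 0 in L²(0,1), but ‖Cxₙ‖²_{L²(0,1)} → 2 as n → ∞. -/

import Mathlib

open MeasureTheory Set Filter

/-- The measure of the unit interval (0,1] as a restriction of Lebesgue measure. -/
noncomputable def mu01 : Measure ℝ := volume.restrict (Ioc 0 1)

/-- The Cesàro operator: `[Cx](s) = (1/s) ∫₀ˢ x(t) dt`. -/
noncomputable def cesaro (x : ℝ → ℝ) : ℝ → ℝ :=
  fun s => (1 / s) * ∫ t in Ioc (0:ℝ) s, x t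

/-- The sequence `xₙ(t) = √n · χ_{(0,1/n]}(t)`. -/
noncomputable def xseq (n : ℕ) : ℝ → ℝ :=
  fun t => Real.sqrt n * (Ioc (0:ℝ) (1 / (n:ℝ))).indicator (fun _ => (1:ℝ)) t

/-- The Cesàro operator is not compact: `xₙ ⇀ 0` weakly in L²(0,1), but
`‖Cxₙ‖² → 2`, and in particular no subsequence of `(Cxₙ)` converges strongly in L²(0,1). -/
lemma integral_xseq (n : ℕ) (s : ℝ) (hs : 0 < s) :
    ∫ t in Ioc (0:ℝ) s, xseq n t = Real.sqrt n * min s (1 / n) := by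
  have hmin : (0:ℝ) ≤ min s (1/(n:ℝ)) := le_min hs.le (by positivity)
  simp only [xseq]
  rw [MeasureTheory.integral_const_mul, MeasureTheory.setIntegral_indicator measurableSet_Ioc]
  rw [MeasureTheory.setIntegral_const, Set.Ioc_inter_Ioc]
  simp [Real.volume_Ioc, ENNReal.toReal_ofReal (by linarith : (0:ℝ) ≤ min s (1/(n:ℝ)) - 0)]
  exact Or.inl hs.le


lemma cesaro_xseq (n : ℕ) (s : ℝ) (hs : 0 < s) :
    cesaro (xseq n) s = (1/s) * (Real.sqrt n * min s (1 / n)) := by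
  rw [cesaro, integral_xseq n s hs]

lemma cesaro_small {n : ℕ} {s : ℝ} (hs0 : 0 < s) (hs : s ≤ 1 / (n:ℝ)) :
    cesaro (xseq n) s = Real.sqrt n := by
  rw [cesaro_xseq n s hs0, min_eq_left hs]
  field_simp

lemma cesaro_large {n : ℕ} {s : ℝ} (hs0 : 0 < s) (hs : 1 / (n:ℝ) ≤ s) :
    cesaro (xseq n) s = 1 / (Real.sqrt n * s) := by
  rcases Nat.eq_zero_or_pos n with h0 | hn
  · subst h0; simp [cesaro_xseq 0 s hs0]
  have hn0 : (0:ℝ) < n := by exact_mod_cast hn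
  have hsq : Real.sqrt n * Real.sqrt n = n := Real.mul_self_sqrt hn0.le
  have hsqpos : 0 < Real.sqrt n := Real.sqrt_pos.2 hn0
  rw [cesaro_xseq n s hs0, min_eq_right hs]
  field_simp
  nlinarith [hsq]

lemma part2_eq {n : ℕ} (hn : 1 ≤ n) :
    ∫ s, (cesaro (xseq n) s) ^ 2 ∂mu01 = 2 - 1 / n := by
  have hn0 : (0:ℝ) < n := by exact_mod_cast hn
  have h1n : (0:ℝ) < 1 / n := by positivity
  have h1n1 : 1 / (n:ℝ) ≤ 1 := by
    rw [div_le_one hn0]; exact_mod_cast hn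
  have heq1 : EqOn (fun s => (cesaro (xseq n) s) ^ 2) (fun _ => (n:ℝ))
      (Ioc (0:ℝ) (1/n)) := by
    intro s hs
    simp only
    rw [cesaro_small hs.1 hs.2, Real.sq_sqrt hn0.le]
  have heq2 : EqOn (fun s => (cesaro (xseq n) s) ^ 2) (fun s => (n:ℝ)⁻¹ * s ^ (-2:ℤ))
      (Ioc (1/(n:ℝ)) 1) := by
    intro s hs
    have hs0 : 0 < s := h1n.trans hs.1
    simp only
    rw [cesaro_large hs0 hs.1.le]
    have hsq : Real.sqrt n ^ 2 = n := Real.sq_sqrt hn0.le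
    rw [div_pow, mul_pow, hsq]
    rw [zpow_neg, zpow_two]
    field_simp
  have hcont : ContinuousOn (fun s => (n:ℝ)⁻¹ * s ^ (-2:ℤ)) (Icc (1/(n:ℝ)) 1) := by
    apply ContinuousOn.mul continuousOn_const
    apply ContinuousOn.zpow₀ continuousOn_id
    intro s hs
    exact Or.inl (ne_of_gt (h1n.trans_le hs.1))
  have hint1 : IntegrableOn (fun s => (cesaro (xseq n) s) ^ 2) (Ioc (0:ℝ) (1/n)) volume := by
    rw [integrableOn_congr_fun heq1 measurableSet_Ioc]
    exact integrableOn_const (by simp [Real.volume_Ioc])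
  have hint2 : IntegrableOn (fun s => (cesaro (xseq n) s) ^ 2) (Ioc (1/(n:ℝ)) 1) volume := by
    rw [integrableOn_congr_fun heq2 measurableSet_Ioc]
    exact (hcont.integrableOn_Icc).mono_set Ioc_subset_Icc_self
  have e1 : ∫ s in Ioc (0:ℝ) (1/n), (cesaro (xseq n) s) ^ 2 = 1 := by
    rw [setIntegral_congr_fun measurableSet_Ioc heq1, setIntegral_const]
    simp [Real.volume_Ioc, ENNReal.toReal_ofReal h1n.le]
    field_simp
  have e2 : ∫ s in Ioc (1/(n:ℝ)) 1, (cesaro (xseq n) s) ^ 2 = 1 - 1/n := by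
    rw [setIntegral_congr_fun measurableSet_Ioc heq2,
      ← intervalIntegral.integral_of_le h1n1, intervalIntegral.integral_const_mul,
      integral_zpow (Or.inr ⟨by norm_num, by
        rw [Set.uIcc_of_le h1n1]
        intro h
        exact absurd h.1 (not_le.2 h1n)⟩)]
    have hne : (n:ℝ) ≠ 0 := ne_of_gt hn0
    norm_num
    field_simp
    ring
  rw [show mu01 = volume.restrict (Ioc 0 1) from rfl,
    ← Set.Ioc_union_Ioc_eq_Ioc h1n.le h1n1,
    setIntegral_union (Set.Ioc_disjoint_Ioc_of_le le_rfl) measurableSet_Ioc hint1 hint2, e1, e2]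
  ring

instance : IsFiniteMeasure mu01 := by
  constructor
  rw [mu01, Measure.restrict_apply_univ, Real.volume_Ioc]
  exact ENNReal.ofReal_lt_top

lemma sq_tail_tendsto (y : ℝ → ℝ) (hy : MemLp y 2 mu01) :
    Tendsto (fun n : ℕ => ∫ t in Ioc (0:ℝ) (1/n), y t ^ 2 ∂mu01) atTop (nhds 0) := by
  have hsq : Integrable (fun t => y t ^ 2) mu01 := hy.integrable_sq
  have key : Tendsto (fun n : ℕ => ∫ t, (Ioc (0:ℝ) (1/n)).indicator (fun t => y t ^ 2) t ∂mu01)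
      atTop (nhds (∫ _, (0:ℝ) ∂mu01)) := by
    apply tendsto_integral_of_dominated_convergence (fun t => y t ^ 2)
    · exact fun n => hsq.aestronglyMeasurable.indicator measurableSet_Ioc
    · exact hsq
    · intro n
      filter_upwards with t
      rw [Real.norm_eq_abs]
      rcases Set.indicator_eq_zero_or_self (Ioc (0:ℝ) (1/n)) (fun t => y t ^ 2) t with h | h <;>
        rw [h] <;> [simp [sq_nonneg]; rw [abs_of_nonneg (sq_nonneg _)]]
    · have hmem : ∀ᵐ t ∂mu01, t ∈ Ioc (0:ℝ) 1 := by
        rw [mu01]; exact ae_restrict_mem measurableSet_Ioc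
      filter_upwards [hmem] with t ht
      have : ∀ᶠ n : ℕ in atTop, (Ioc (0:ℝ) (1/n)).indicator (fun t => y t ^ 2) t = 0 := by
        obtain ⟨N, hN⟩ := exists_nat_gt (1 / t)
        filter_upwards [eventually_ge_atTop N] with n hn
        apply Set.indicator_of_notMem
        intro hmem2
        have hNn : (1:ℝ)/t < n := lt_of_lt_of_le hN (by exact_mod_cast hn)
        have hn0 : (0:ℝ) < n := lt_trans (div_pos one_pos ht.1) hNn
        have : (1:ℝ)/n < t := by
          rw [div_lt_iff₀ ht.1] at hNn
          rw [div_lt_iff₀ hn0]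
          linarith [mul_comm t (n:ℝ)]
        exact absurd hmem2.2 (not_le.2 this)
      exact tendsto_const_nhds.congr' (this.mono fun n h => h.symm)
  simp only [integral_zero] at key
  apply key.congr
  intro n
  rw [integral_indicator measurableSet_Ioc]

lemma part1 (y : ℝ → ℝ) (hy : MemLp y 2 mu01) :
    Tendsto (fun n : ℕ => ∫ t, xseq n t * y t ∂mu01) atTop (nhds 0) := by
  have hyint : Integrable y mu01 := hy.integrable one_le_two
  have hsq : Integrable (fun t => y t ^ 2) mu01 := hy.integrable_sq
  have hrw : ∀ n : ℕ, (∫ t, xseq n t * y t ∂mu01)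
      = Real.sqrt n * ∫ t in Ioc (0:ℝ) (1/(n:ℝ)), y t ∂mu01 := by
    intro n
    rw [← integral_indicator measurableSet_Ioc, ← integral_const_mul]
    congr 1; funext t
    simp only [xseq]
    rcases em (t ∈ Ioc (0:ℝ) (1/(n:ℝ))) with h | h
    · rw [Set.indicator_of_mem h, Set.indicator_of_mem h]; ring
    · rw [Set.indicator_of_notMem h, Set.indicator_of_notMem h]; ring
  have ha := sq_tail_tendsto y hy
  rw [NormedAddCommGroup.tendsto_nhds_zero]
  intro ε hε
  have hev1 : ∀ᶠ n : ℕ in atTop,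
      (∫ t in Ioc (0:ℝ) (1/(n:ℝ)), y t ^ 2 ∂mu01) < ε ^ 2 :=
    ha.eventually (gt_mem_nhds (by positivity))
  filter_upwards [hev1, eventually_ge_atTop 1] with n han hn1
  have hn0 : (0:ℝ) < n := by exact_mod_cast hn1
  set B : Set ℝ := Ioc (0:ℝ) (1/(n:ℝ)) with hB
  set a : ℝ := ∫ t in B, y t ^ 2 ∂mu01 with haa
  have hsqrtnn : (0:ℝ) ≤ Real.sqrt n := Real.sqrt_nonneg _
  have step1 : ‖∫ t, xseq n t * y t ∂mu01‖ ≤ Real.sqrt n * ∫ t in B, ‖y t‖ ∂mu01 := by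
    rw [hrw n, norm_mul, Real.norm_of_nonneg hsqrtnn]
    exact mul_le_mul_of_nonneg_left (norm_integral_le_integral_norm _) hsqrtnn
  have step2 : Real.sqrt n * ∫ t in B, ‖y t‖ ∂mu01
      ≤ ∫ t in B, (ε * n / 2 + y t ^ 2 * (1 / (2 * ε))) ∂mu01 := by
    rw [← integral_const_mul]
    apply setIntegral_mono_on
    · exact (hyint.norm.const_mul _).integrableOn
    · exact ((integrable_const _).add (hsq.mul_const _)).integrableOn
    · exact measurableSet_Ioc
    · intro t _
      have h1 : Real.sqrt n ^ 2 = n := Real.sq_sqrt hn0.le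
      have h2 : ‖y t‖ ^ 2 = y t ^ 2 := by rw [Real.norm_eq_abs, sq_abs]
      have key : 2 * ε * (Real.sqrt n * ‖y t‖) ≤ ε ^ 2 * n + y t ^ 2 := by
        nlinarith [sq_nonneg (ε * Real.sqrt n - ‖y t‖)]
      have h2e : (0:ℝ) < 2 * ε := by positivity
      rw [show Real.sqrt n * ‖y t‖ = (2 * ε * (Real.sqrt n * ‖y t‖)) / (2 * ε) by field_simp,
        div_le_iff₀ h2e]
      calc 2 * ε * (Real.sqrt n * ‖y t‖) ≤ ε ^ 2 * n + y t ^ 2 := key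
        _ = (ε * n / 2 + y t ^ 2 * (1 / (2 * ε))) * (2 * ε) := by field_simp
  have step3 : ∫ t in B, (ε * n / 2 + y t ^ 2 * (1 / (2 * ε))) ∂mu01
      = (ε * n / 2) * (mu01 B).toReal + a * (1 / (2 * ε)) := by
    rw [integral_add ((integrable_const _).integrableOn) (hsq.mul_const _).integrableOn,
      setIntegral_const, integral_mul_const]
    simp [mul_comm, Measure.real, haa]
  have hmuB : (mu01 B).toReal ≤ 1 / n := by
    have h1 : mu01 B ≤ ENNReal.ofReal (1 / n) := by
      rw [mu01, Measure.restrict_apply measurableSet_Ioc]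
      calc volume (B ∩ Ioc 0 1) ≤ volume B := measure_mono inter_subset_left
        _ = ENNReal.ofReal (1 / n - 0) := Real.volume_Ioc
        _ = ENNReal.ofReal (1 / n) := by rw [sub_zero]
    calc (mu01 B).toReal ≤ (ENNReal.ofReal (1/(n:ℝ))).toReal :=
          ENNReal.toReal_mono ENNReal.ofReal_ne_top h1
      _ = 1 / n := ENNReal.toReal_ofReal (by positivity)
  have step4 : (ε * n / 2) * (mu01 B).toReal + a * (1 / (2 * ε)) < ε := by
    have hle : (ε * n / 2) * (mu01 B).toReal ≤ ε / 2 := by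
      calc (ε * n / 2) * (mu01 B).toReal ≤ (ε * n / 2) * (1 / n) :=
            mul_le_mul_of_nonneg_left hmuB (by positivity)
        _ = ε / 2 := by field_simp
    have hlt : a * (1 / (2 * ε)) < ε / 2 := by
      calc a * (1 / (2 * ε)) < ε ^ 2 * (1 / (2 * ε)) := by
            apply mul_lt_mul_of_pos_right han (by positivity)
        _ = ε / 2 := by field_simp
    linarith
  linarith [step1.trans (step2.trans_eq step3)]

lemma cesaro_aesm (n : ℕ) : AEStronglyMeasurable (cesaro (xseq n)) mu01 := by
  have hF : Measurable (fun s : ℝ => (1/s) * (Real.sqrt n * min s (1 / (n:ℝ)))) := by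
    apply Measurable.mul
    · exact measurable_const.div measurable_id
    · exact measurable_const.mul (measurable_id.min measurable_const)
  have hae : cesaro (xseq n) =ᵐ[mu01] fun s => (1/s) * (Real.sqrt n * min s (1 / (n:ℝ))) := by
    have hmem : ∀ᵐ s ∂mu01, s ∈ Ioc (0:ℝ) 1 := by
      rw [mu01]; exact ae_restrict_mem measurableSet_Ioc
    filter_upwards [hmem] with s hs
    exact cesaro_xseq n s hs.1
  exact hF.aestronglyMeasurable.congr hae.symm

lemma cesaro_lower {n : ℕ} (hn : 1 ≤ n) :
    1 ≤ eLpNorm (cesaro (xseq n)) 2 mu01 := by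
  have hn0 : (0:ℝ) < n := by exact_mod_cast hn
  have h1n1 : 1 / (n:ℝ) ≤ 1 := by rw [div_le_one hn0]; exact_mod_cast hn
  have hmono : ∀ s : ℝ,
      ‖(Ioc (0:ℝ) (1/(n:ℝ))).indicator (fun _ => Real.sqrt n) s‖ ≤ ‖cesaro (xseq n) s‖ := by
    intro s
    rcases em (s ∈ Ioc (0:ℝ) (1/(n:ℝ))) with h | h
    · rw [Set.indicator_of_mem h, cesaro_small h.1 h.2]
    · rw [Set.indicator_of_notMem h]; simp
  have key := eLpNorm_mono (p := 2) (μ := mu01) hmono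
  have heq : eLpNorm ((Ioc (0:ℝ) (1/(n:ℝ))).indicator (fun _ => Real.sqrt n)) 2 mu01 = 1 := by
    rw [eLpNorm_indicator_const measurableSet_Ioc two_ne_zero ENNReal.ofNat_ne_top]
    have hμ : mu01 (Ioc (0:ℝ) (1/(n:ℝ))) = ENNReal.ofReal (1/(n:ℝ)) := by
      rw [mu01, Measure.restrict_apply measurableSet_Ioc, Set.Ioc_inter_Ioc,
        max_self, min_eq_left h1n1, Real.volume_Ioc, sub_zero]
    rw [hμ]
    have h2 : 1 / (2:ENNReal).toReal = 1/2 := by norm_num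
    rw [h2, ENNReal.ofReal_rpow_of_nonneg (by positivity) (by norm_num : (0:ℝ) ≤ 1/2),
      Real.enorm_eq_ofReal (Real.sqrt_nonneg _),
      ← ENNReal.ofReal_mul (Real.sqrt_nonneg _), ← Real.sqrt_eq_rpow,
      ← Real.sqrt_mul hn0.le, mul_one_div, div_self (ne_of_gt hn0), Real.sqrt_one,
      ENNReal.ofReal_one]
  exact heq.symm.trans_le key

lemma cesaro_pt_tendsto {s : ℝ} (hs : 0 < s) :
    Tendsto (fun n : ℕ => cesaro (xseq n) s) atTop (nhds 0) := by
  have hsqrt : Tendsto (fun n : ℕ => Real.sqrt n) atTop atTop := by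
    have h1 : Tendsto Real.sqrt atTop atTop :=
      tendsto_atTop_atTop_of_monotone (fun x y h => Real.sqrt_le_sqrt h)
        (fun b => ⟨b ^ 2, by rw [Real.sqrt_sq_eq_abs]; exact le_abs_self b⟩)
    exact h1.comp tendsto_natCast_atTop_atTop
  have hlim : Tendsto (fun n : ℕ => (Real.sqrt n)⁻¹ * (1/s)) atTop (nhds 0) := by
    simpa using (hsqrt.inv_tendsto_atTop).mul_const (1/s)
  apply hlim.congr'
  obtain ⟨N, hN⟩ := exists_nat_gt (1 / s)
  filter_upwards [eventually_ge_atTop (max N 1)] with n hn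
  have hn1 : 1 ≤ n := le_trans (le_max_right _ _) hn
  have hn0 : (0:ℝ) < n := by exact_mod_cast hn1
  have hNn : (1:ℝ)/s < n :=
    lt_of_lt_of_le hN (by exact_mod_cast le_trans (le_max_left _ _) hn)
  have h1ns : 1 / (n:ℝ) ≤ s := by
    rw [div_le_iff₀ hn0]
    rw [div_lt_iff₀ hs] at hNn
    linarith [mul_comm s (n:ℝ)]
  rw [cesaro_large hs h1ns]
  field_simp

lemma part3 (φ : ℕ → ℕ) (hφ : StrictMono φ) (g : ℝ → ℝ) (hg : MemLp g 2 mu01)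
    (h : Tendsto (fun k => eLpNorm (fun s => cesaro (xseq (φ k)) s - g s) 2 mu01)
      atTop (nhds 0)) : False := by
  have hf : ∀ k, AEStronglyMeasurable (fun s => cesaro (xseq (φ k)) s) mu01 :=
    fun k => cesaro_aesm (φ k)
  have hTIM : TendstoInMeasure mu01 (fun k s => cesaro (xseq (φ k)) s) atTop g := by
    apply tendstoInMeasure_of_tendsto_eLpNorm (p := 2) two_ne_zero hf hg.aestronglyMeasurable
    exact h
  obtain ⟨ns, hns, hae⟩ := hTIM.exists_seq_tendsto_ae
  have hg0 : g =ᵐ[mu01] 0 := by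
    have hmem : ∀ᵐ s ∂mu01, s ∈ Ioc (0:ℝ) 1 := by
      rw [mu01]; exact ae_restrict_mem measurableSet_Ioc
    filter_upwards [hae, hmem] with s h1 h2
    have h3 : Tendsto (fun i => cesaro (xseq (φ (ns i))) s) atTop (nhds 0) :=
      (cesaro_pt_tendsto h2.1).comp ((hφ.comp hns).tendsto_atTop)
    exact tendsto_nhds_unique h1 h3
  have h' : Tendsto (fun k => eLpNorm (fun s => cesaro (xseq (φ k)) s) 2 mu01)
      atTop (nhds 0) := by
    apply h.congr; intro k
    apply eLpNorm_congr_ae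
    filter_upwards [hg0] with s h0
    simp only [Pi.zero_apply] at h0
    simp [h0]
  have hev := h'.eventually (gt_mem_nhds (zero_lt_one (α := ENNReal)))
  obtain ⟨k, hk1, hk2⟩ := (hev.and (eventually_ge_atTop 1)).exists
  have hlb : (1:ENNReal) ≤ eLpNorm (fun s => cesaro (xseq (φ k)) s) 2 mu01 :=
    cesaro_lower (le_trans hk2 hφ.le_apply)
  exact absurd hk1 (not_lt.2 hlb)


theorem cesaro_not_compact :
    (∀ y : ℝ → ℝ, MemLp y 2 mu01 →
      Tendsto (fun n => ∫ t, xseq n t * y t ∂mu01) atTop (nhds 0)) ∧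
    (Tendsto (fun n => ∫ s, (cesaro (xseq n) s) ^ 2 ∂mu01) atTop (nhds 2)) ∧
    (∀ φ : ℕ → ℕ, StrictMono φ → ∀ g : ℝ → ℝ, MemLp g 2 mu01 →
      ¬ Tendsto (fun k => eLpNorm (fun s => cesaro (xseq (φ k)) s - g s) 2 mu01)
        atTop (nhds 0)) := by
  refine ⟨part1, ?_, fun φ hφ g hg h => part3 φ hφ g hg h⟩
  have hlim : Tendsto (fun n : ℕ => 2 - 1/(n:ℝ)) atTop (nhds 2) := by
    simpa using (tendsto_const_nhds : Tendsto (fun _ : ℕ => (2:ℝ)) atTop (nhds 2)).sub tendsto_one_div_atTop_nhds_zero_nat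
  apply hlim.congr'
  filter_upwards [eventually_ge_atTop 1] with n hn
  exact (part2_eq hn).symm
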